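/- For the Ising model on the 2-regular configuration model, the quenched pressure converges in probability to the one-dimensional Ising pressure: ψ_N(β,B) = (1/N) log Z_N(β,B) → log λ₊(β,B), where λ₊(β,B) = e^β(cosh(B) + √(sinh²(B) + e^{-4β})). -/

import Mathlib

open Real Finset Filter MeasureTheory

/-- The larger transfer-matrix eigenvalue `λ₊(β,B)`. -/
noncomputable def lamP (β B : ℝ) : ℝ :=
  Real.exp β * (Real.cosh B + Real.sqrt (Real.sinh B ^ 2 + Real.exp (-4 * β)))

/-- The smaller transfer-matrix eigenvalue `λ₋(β,B)`. -/
noncomputable def lamM (β B : ℝ) : ℝ :=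
  Real.exp β * (Real.cosh B - Real.sqrt (Real.sinh B ^ 2 + Real.exp (-4 * β)))

lemma sqrt_lt_cosh (β B : ℝ) (hβ : 0 < β) :
    Real.sqrt (Real.sinh B ^ 2 + Real.exp (-4 * β)) < Real.cosh B := by
  have h1 : Real.sinh B ^ 2 + Real.exp (-4 * β) < Real.cosh B ^ 2 := by
    have he : Real.exp (-4 * β) < 1 := by
      rw [Real.exp_lt_one_iff]; linarith
    nlinarith [Real.cosh_sq B]
  have hc : 0 < Real.cosh B := Real.cosh_pos B
  rw [show Real.cosh B = Real.sqrt (Real.cosh B ^ 2) by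
    rw [Real.sqrt_sq hc.le]]
  exact Real.sqrt_lt_sqrt (by positivity) h1

lemma lamM_pos (β B : ℝ) (hβ : 0 < β) : 0 < lamM β B := by
  have := sqrt_lt_cosh β B hβ
  unfold lamM
  have := Real.exp_pos β
  nlinarith

lemma lamM_le_lamP (β B : ℝ) : lamM β B ≤ lamP β B := by
  unfold lamM lamP
  have := Real.exp_pos β
  have : 0 ≤ Real.sqrt (Real.sinh B ^ 2 + Real.exp (-4 * β)) := Real.sqrt_nonneg _
  nlinarith [Real.exp_pos β]

lemma key (β B : ℝ) (hβ : 0 < β) (K : ℕ) (L : ℕ → ℕ) (N : ℕ) (hN : 0 < N)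
    (hsum : ∑ i ∈ Finset.range K, L i = N) :
    |(1 / (N : ℝ)) * Real.log
        (∏ i ∈ Finset.range K, (lamP β B ^ L i + lamM β B ^ L i))
      - Real.log (lamP β B)| ≤ ((K : ℝ) / N) * Real.log 2 := by
  have hb : 0 < lamM β B := lamM_pos β B hβ
  have ha : 0 < lamP β B := lt_of_lt_of_le hb (lamM_le_lamP β B)
  have hNR : (0 : ℝ) < N := by exact_mod_cast hN
  set a := lamP β B
  set b := lamM β B
  set Z := ∏ i ∈ Finset.range K, (a ^ L i + b ^ L i) with hZ
  have hZpos : 0 < Z := Finset.prod_pos fun i _ => by positivity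
  have hlow : a ^ N ≤ Z := by
    rw [← hsum, ← Finset.prod_pow_eq_pow_sum]
    exact Finset.prod_le_prod (fun i _ => by positivity)
      (fun i _ => le_add_of_nonneg_right (by positivity))
  have hup : Z ≤ 2 ^ K * a ^ N := by
    have : Z ≤ ∏ i ∈ Finset.range K, (2 * a ^ L i) :=
      Finset.prod_le_prod (fun i _ => by positivity)
        (fun i _ => by
          have : b ^ L i ≤ a ^ L i := pow_le_pow_left₀ hb.le (lamM_le_lamP β B) _
          linarith)
    calc Z ≤ ∏ i ∈ Finset.range K, (2 * a ^ L i) := this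
      _ = 2 ^ K * a ^ N := by
          rw [Finset.prod_mul_distrib, Finset.prod_const, Finset.card_range,
            Finset.prod_pow_eq_pow_sum, hsum]
  have hlog1 : (N : ℝ) * Real.log a ≤ Real.log Z := by
    have := Real.log_le_log (by positivity) hlow
    rwa [Real.log_pow] at this
  have hlog2 : Real.log Z ≤ (K : ℝ) * Real.log 2 + (N : ℝ) * Real.log a := by
    have := Real.log_le_log hZpos hup
    rwa [Real.log_mul (by positivity) (by positivity), Real.log_pow, Real.log_pow] at this
  have hx0 : 0 ≤ (1 / (N : ℝ)) * Real.log Z - Real.log a := by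
    have : Real.log a ≤ (1 / (N : ℝ)) * Real.log Z := by
      rw [one_div, inv_mul_eq_div, le_div_iff₀ hNR]
      linarith
    linarith
  rw [abs_of_nonneg hx0]
  have hmul : (1 / (N : ℝ)) * Real.log Z ≤
      (1 / (N : ℝ)) * ((K : ℝ) * Real.log 2 + (N : ℝ) * Real.log a) :=
    mul_le_mul_of_nonneg_left hlog2 (by positivity)
  have heq : (1 / (N : ℝ)) * ((K : ℝ) * Real.log 2 + (N : ℝ) * Real.log a)
      = (K : ℝ) / N * Real.log 2 + Real.log a := by
    field_simp
  linarith

theorem cm2_pressure_convergence (β B : ℝ) (hβ : 0 < β)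
    (Ω : ℕ → Type*) [∀ N, MeasurableSpace (Ω N)]
    (μ : ∀ N, Measure (Ω N)) (hμ : ∀ N, IsProbabilityMeasure (μ N))
    (K : ∀ N : ℕ, Ω N → ℕ) (hKmeas : ∀ N, Measurable (K N))
    (L : ∀ N : ℕ, Ω N → ℕ → ℕ) (hLmeas : ∀ N i, Measurable fun ω => L N ω i)
    (hsum : ∀ N : ℕ, ∀ ω, ∑ i ∈ Finset.range (K N ω), L N ω i = N)
    (hK : ∀ ε > 0, Tendsto (fun N : ℕ => μ N {ω | ε ≤ (K N ω : ℝ) / N})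
      atTop (nhds 0)) :
    ∀ ε > 0, Tendsto (fun N : ℕ =>
        μ N {ω | ε ≤ |(1 / (N : ℝ)) * Real.log
            (∏ i ∈ Finset.range (K N ω), (lamP β B ^ L N ω i + lamM β B ^ L N ω i))
          - Real.log (lamP β B)|}) atTop (nhds 0) := by
  intro ε hε
  have hlog2 : (0 : ℝ) < Real.log 2 := Real.log_pos (by norm_num)
  have hε' : 0 < ε / Real.log 2 := div_pos hε hlog2
  refine tendsto_of_tendsto_of_tendsto_of_le_of_le'
    tendsto_const_nhds (hK _ hε') ?_ ?_
  · filter_upwards with N using zero_le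
  · filter_upwards [eventually_ge_atTop 1] with N hN
    apply measure_mono
    intro ω hω
    simp only [Set.mem_setOf_eq] at hω ⊢
    have hkey := key β B hβ (K N ω) (L N ω) N hN (hsum N ω)
    have : ε ≤ ((K N ω : ℝ) / N) * Real.log 2 := le_trans hω hkey
    rw [div_le_iff₀ hlog2]
    linarith
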